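/- (Poincaré–Miranda in dimension 2, used to justify the multidimensional bisection) Let f, g : [a₁,a₂]×[b₁,b₂] → R be continuous, with f(a₁,y) ≤ 0 ≤ f(a₂,y) for all y ∈ [b₁,b₂] and g(x,b₁) ≤ 0 ≤ g(x,b₂) for all x ∈ [a₁,a₂]. Then there exists (x*,y*) in the rectangle with f(x*,y*) = 0 and g(x*,y*) = 0. -/

import Mathlib

/-- Indicator (in `ZMod 2`) that an edge has labels `{0,1}`. -/
def e01 (a b : Fin 3) : ZMod 2 := if a = 0 ∧ b = 1 ∨ a = 1 ∧ b = 0 then 1 else 0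

lemma e01_key : ∀ a b c d : Fin 3,
    e01 a b + e01 c d + (e01 a c + e01 b d) = 1 →
    (a = 0 ∨ b = 0 ∨ c = 0 ∨ d = 0) ∧ (a = 1 ∨ b = 1 ∨ c = 1 ∨ d = 1) ∧
    (a = 2 ∨ b = 2 ∨ c = 2 ∨ d = 2) := by decide

lemma e01_ne0 : ∀ a b : Fin 3, a ≠ 0 → b ≠ 0 → e01 a b = 0 := by decide
lemma e01_ne1 : ∀ a b : Fin 3, a ≠ 1 → b ≠ 1 → e01 a b = 0 := by decide
lemma e01_ne2 : ∀ a b : Fin 3, a ≠ 2 → b ≠ 2 →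
    e01 a b = (if b = 1 then (1 : ZMod 2) else 0) - (if a = 1 then 1 else 0) := by decide

lemma zmod2_eq_one : ∀ x : ZMod 2, x ≠ 0 → x = 1 := by decide

/-- Discrete Poincaré–Miranda / Sperner-type lemma on an `n × n` grid. -/
lemma grid_lemma (n : ℕ) (ℓ : ℕ → ℕ → Fin 3)
    (hL : ∀ j ≤ n, ℓ 0 j ≠ 1) (hR : ∀ j ≤ n, ℓ n j = 1)
    (hB : ∀ i ≤ n, ℓ i 0 ≠ 2) (hT : ∀ i ≤ n, ℓ i n ≠ 0) :
    ∃ i < n, ∃ j < n, ∃ q0 q1 q2 : ℕ × ℕ,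
      q0 ∈ ({(i,j),(i+1,j),(i,j+1),(i+1,j+1)} : Set (ℕ × ℕ)) ∧
      q1 ∈ ({(i,j),(i+1,j),(i,j+1),(i+1,j+1)} : Set (ℕ × ℕ)) ∧
      q2 ∈ ({(i,j),(i+1,j),(i,j+1),(i+1,j+1)} : Set (ℕ × ℕ)) ∧
      ℓ q0.1 q0.2 = 0 ∧ ℓ q1.1 q1.2 = 1 ∧ ℓ q2.1 q2.2 = 2 := by
  set h : ℕ → ℕ → ZMod 2 := fun i j => e01 (ℓ i j) (ℓ (i+1) j) with hh
  set v : ℕ → ℕ → ZMod 2 := fun i j => e01 (ℓ i j) (ℓ i (j+1)) with hv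
  have hsum : ∑ i ∈ Finset.range n, ∑ j ∈ Finset.range n,
      (h i j + h i (j+1) + (v i j + v (i+1) j)) = 1 := by
    have split : ∑ i ∈ Finset.range n, ∑ j ∈ Finset.range n,
        (h i j + h i (j+1) + (v i j + v (i+1) j))
        = (∑ i ∈ Finset.range n, ∑ j ∈ Finset.range n, (h i j + h i (j+1)))
          + ∑ j ∈ Finset.range n, ∑ i ∈ Finset.range n, (v i j + v (i+1) j) := by
      rw [Finset.sum_congr rfl (fun i (_ : i ∈ Finset.range n) =>
        (Finset.sum_add_distrib (f := fun j => h i j + h i (j+1))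
          (g := fun j => v i j + v (i+1) j))), Finset.sum_add_distrib]
      congr 1
      exact Finset.sum_comm
    rw [split]
    have tele : ∀ (F : ℕ → ZMod 2), ∑ k ∈ Finset.range n, (F k + F (k+1)) = F 0 + F n := by
      intro F
      have := Finset.sum_range_sub (f := F) n
      calc ∑ k ∈ Finset.range n, (F k + F (k+1))
          = ∑ k ∈ Finset.range n, (F (k+1) - F k) := by
            refine Finset.sum_congr rfl fun k _ => ?_
            rw [CharTwo.sub_eq_add, add_comm]
        _ = F n - F 0 := Finset.sum_range_sub F n
        _ = F 0 + F n := by rw [CharTwo.sub_eq_add, add_comm]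
    have hrow : ∀ i ∈ Finset.range n, ∑ j ∈ Finset.range n, (h i j + h i (j+1))
        = h i 0 + h i n := fun i _ => tele (fun j => h i j)
    have hcol : ∀ j ∈ Finset.range n, ∑ i ∈ Finset.range n, (v i j + v (i+1) j)
        = v 0 j + v n j := fun j _ => tele (fun i => v i j)
    rw [Finset.sum_congr rfl hrow, Finset.sum_congr rfl hcol]
    have hvz : ∀ j ∈ Finset.range n, v 0 j + v n j = 0 := by
      intro j hj
      have hj' : j + 1 ≤ n := Finset.mem_range.mp hj
      have h1 : v 0 j = 0 := e01_ne1 _ _ (hL j (le_of_lt (Finset.mem_range.mp hj))) (hL (j+1) hj')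
      have h2 : v n j = 0 := by
        simp only [hv]
        rw [hR j (le_of_lt (Finset.mem_range.mp hj)), hR (j+1) hj']
        decide
      rw [h1, h2, add_zero]
    rw [Finset.sum_congr rfl hvz, Finset.sum_const, smul_zero, add_zero]
    have htz : ∀ i ∈ Finset.range n, h i 0 + h i n = h i 0 := by
      intro i hi
      have hi' : i + 1 ≤ n := Finset.mem_range.mp hi
      rw [show h i n = 0 from
        e01_ne0 _ _ (hT i (le_of_lt (Finset.mem_range.mp hi))) (hT (i+1) hi'), add_zero]
    rw [Finset.sum_congr rfl htz]
    have hbot : ∀ i ∈ Finset.range n, h i 0 =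
        (fun k => if ℓ k 0 = 1 then (1 : ZMod 2) else 0) (i+1)
        - (fun k => if ℓ k 0 = 1 then (1 : ZMod 2) else 0) i := by
      intro i hi
      have hi' : i + 1 ≤ n := Finset.mem_range.mp hi
      exact e01_ne2 _ _ (hB i (le_of_lt (Finset.mem_range.mp hi))) (hB (i+1) hi')
    rw [Finset.sum_congr rfl hbot,
      Finset.sum_range_sub (f := fun k => if ℓ k 0 = 1 then (1 : ZMod 2) else 0)]
    by_cases hn : n = 0
    · exfalso
      have := hR 0 (by omega)
      exact hL 0 (by omega) (by rw [← hn] at this ⊢; exact this)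
    · simp [hR 0 (Nat.zero_le n), hL 0 (Nat.zero_le n)]
  have : ∃ i ∈ Finset.range n, ∃ j ∈ Finset.range n,
      (h i j + h i (j+1) + (v i j + v (i+1) j)) ≠ 0 := by
    by_contra hc
    push_neg at hc
    rw [Finset.sum_eq_zero (fun i hi => Finset.sum_eq_zero (hc i hi))] at hsum
    exact one_ne_zero hsum.symm
  obtain ⟨i, hi, j, hj, hne⟩ := this
  have h1 := zmod2_eq_one _ hne
  obtain ⟨c0, c1, c2⟩ := e01_key (ℓ i j) (ℓ (i+1) j) (ℓ i (j+1)) (ℓ (i+1) (j+1)) h1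
  refine ⟨i, Finset.mem_range.mp hi, j, Finset.mem_range.mp hj, ?_⟩
  obtain ⟨q0, hq0m, hq0⟩ : ∃ q : ℕ × ℕ,
      q ∈ ({(i,j),(i+1,j),(i,j+1),(i+1,j+1)} : Set (ℕ × ℕ)) ∧ ℓ q.1 q.2 = 0 := by
    rcases c0 with h' | h' | h' | h'
    · exact ⟨(i,j), by simp, h'⟩
    · exact ⟨(i+1,j), by simp, h'⟩
    · exact ⟨(i,j+1), by simp, h'⟩
    · exact ⟨(i+1,j+1), by simp, h'⟩
  obtain ⟨q1, hq1m, hq1⟩ : ∃ q : ℕ × ℕ,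
      q ∈ ({(i,j),(i+1,j),(i,j+1),(i+1,j+1)} : Set (ℕ × ℕ)) ∧ ℓ q.1 q.2 = 1 := by
    rcases c1 with h' | h' | h' | h'
    · exact ⟨(i,j), by simp, h'⟩
    · exact ⟨(i+1,j), by simp, h'⟩
    · exact ⟨(i,j+1), by simp, h'⟩
    · exact ⟨(i+1,j+1), by simp, h'⟩
  obtain ⟨q2, hq2m, hq2⟩ : ∃ q : ℕ × ℕ,
      q ∈ ({(i,j),(i+1,j),(i,j+1),(i+1,j+1)} : Set (ℕ × ℕ)) ∧ ℓ q.1 q.2 = 2 := by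
    rcases c2 with h' | h' | h' | h'
    · exact ⟨(i,j), by simp, h'⟩
    · exact ⟨(i+1,j), by simp, h'⟩
    · exact ⟨(i,j+1), by simp, h'⟩
    · exact ⟨(i+1,j+1), by simp, h'⟩
  exact ⟨q0, q1, q2, hq0m, hq1m, hq2m, hq0, hq1, hq2⟩

/-- Approximate Poincaré–Miranda with strict boundary signs. -/
lemma approx_pm (a₁ a₂ b₁ b₂ : ℝ) (ha : a₁ < a₂) (hb : b₁ < b₂)
    (F G : ℝ × ℝ → ℝ)
    (hF : ContinuousOn F (Set.Icc a₁ a₂ ×ˢ Set.Icc b₁ b₂))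
    (hG : ContinuousOn G (Set.Icc a₁ a₂ ×ˢ Set.Icc b₁ b₂))
    (hF1 : ∀ y ∈ Set.Icc b₁ b₂, F (a₁, y) < 0)
    (hF2 : ∀ y ∈ Set.Icc b₁ b₂, 0 < F (a₂, y))
    (hG1 : ∀ x ∈ Set.Icc a₁ a₂, G (x, b₁) < 0)
    (hG2 : ∀ x ∈ Set.Icc a₁ a₂, 0 < G (x, b₂))
    (ε : ℝ) (hε : 0 < ε) :
    ∃ p ∈ Set.Icc a₁ a₂ ×ˢ Set.Icc b₁ b₂, |F p| ≤ ε ∧ |G p| ≤ ε := by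
  set K := Set.Icc a₁ a₂ ×ˢ Set.Icc b₁ b₂ with hKdef
  have hKc : IsCompact K := isCompact_Icc.prod isCompact_Icc
  obtain ⟨δF, hδF, hFδ⟩ := Metric.uniformContinuousOn_iff.mp
    (hKc.uniformContinuousOn_of_continuous hF) ε hε
  obtain ⟨δG, hδG, hGδ⟩ := Metric.uniformContinuousOn_iff.mp
    (hKc.uniformContinuousOn_of_continuous hG) ε hε
  set δ : ℝ := min δF δG with hδdef
  have hδ : 0 < δ := lt_min hδF hδG
  set M : ℝ := max (a₂ - a₁) (b₂ - b₁) with hMdef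
  have hM : 0 < M := lt_max_of_lt_left (by linarith)
  obtain ⟨n, hngt⟩ := exists_nat_gt (M / δ)
  have hn0 : 0 < n := by
    by_contra hc
    push_neg at hc
    interval_cases n
    · simp at hngt; exact absurd hngt (not_lt.mpr (le_of_lt (div_pos hM hδ))) 
  have hnR : (0 : ℝ) < n := by exact_mod_cast hn0
  have hmeshδ : M / n < δ := by
    rw [div_lt_iff₀ hnR]
    rw [div_lt_iff₀ hδ] at hngt
    linarith [mul_comm δ (n : ℝ)]
  set P : ℕ → ℕ → ℝ × ℝ :=
    fun i j => (a₁ + i * ((a₂ - a₁) / n), b₁ + j * ((b₂ - b₁) / n)) with hPdef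
  have hne : (n:ℝ) ≠ 0 := ne_of_gt hnR
  have hc1 : (0:ℝ) ≤ (a₂ - a₁) / n := div_nonneg (by linarith) hnR.le
  have hc2 : (0:ℝ) ≤ (b₂ - b₁) / n := div_nonneg (by linarith) hnR.le
  have key1 : (n:ℝ) * ((a₂ - a₁) / n) = a₂ - a₁ := by field_simp
  have key2 : (n:ℝ) * ((b₂ - b₁) / n) = b₂ - b₁ := by field_simp
  have hPK : ∀ i ≤ n, ∀ j ≤ n, P i j ∈ K := by
    intro i hi j hj
    have hi' : (i : ℝ) ≤ n := by exact_mod_cast hi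
    have hj' : (j : ℝ) ≤ n := by exact_mod_cast hj
    have u1 : (i : ℝ) * ((a₂ - a₁) / n) ≤ n * ((a₂ - a₁) / n) :=
      mul_le_mul_of_nonneg_right hi' hc1
    have u2 : (j : ℝ) * ((b₂ - b₁) / n) ≤ n * ((b₂ - b₁) / n) :=
      mul_le_mul_of_nonneg_right hj' hc2
    have l1 : (0:ℝ) ≤ (i : ℝ) * ((a₂ - a₁) / n) :=
      mul_nonneg (Nat.cast_nonneg i) hc1
    have l2 : (0:ℝ) ≤ (j : ℝ) * ((b₂ - b₁) / n) :=
      mul_nonneg (Nat.cast_nonneg j) hc2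
    exact ⟨⟨by simp only [P]; linarith, by simp only [P]; linarith⟩,
      ⟨by simp only [P]; linarith, by simp only [P]; linarith⟩⟩
  have coord : ∀ (z c : ℝ), 0 ≤ c → ∀ i1 i2 : ℕ, i1 ≤ i2 + 1 → i2 ≤ i1 + 1 →
      dist (z + i1 * c) (z + i2 * c) ≤ c := by
    intro z c hc i1 i2 h1 h2
    rw [Real.dist_eq]
    have habs : |(i1 : ℝ) - i2| ≤ 1 := by
      rw [abs_le]
      constructor
      · have : (i1 : ℝ) + 1 ≥ i2 := by exact_mod_cast h2
        linarith
      · have : (i1 : ℝ) ≤ i2 + 1 := by exact_mod_cast h1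
        linarith
    have : z + i1 * c - (z + i2 * c) = ((i1 : ℝ) - i2) * c := by ring
    rw [this, abs_mul, abs_of_nonneg hc]
    nlinarith
  have hmesh : ∀ i1 i2 j1 j2 : ℕ, i1 ≤ i2 + 1 → i2 ≤ i1 + 1 → j1 ≤ j2 + 1 → j2 ≤ j1 + 1 →
      dist (P i1 j1) (P i2 j2) < δ := by
    intro i1 i2 j1 j2 h1 h2 h3 h4
    rw [Prod.dist_eq]
    have b1 : dist (P i1 j1).1 (P i2 j2).1 ≤ (a₂ - a₁) / n :=
      coord a₁ ((a₂ - a₁) / n) hc1 i1 i2 h1 h2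
    have b2 : dist (P i1 j1).2 (P i2 j2).2 ≤ (b₂ - b₁) / n :=
      coord b₁ ((b₂ - b₁) / n) hc2 j1 j2 h3 h4
    have c1 : (a₂ - a₁) / n ≤ M / n := by
      gcongr
      exact le_max_left _ _
    have c2 : (b₂ - b₁) / n ≤ M / n := by
      gcongr
      exact le_max_right _ _
    exact max_lt (lt_of_le_of_lt (le_trans b1 c1) hmeshδ)
      (lt_of_le_of_lt (le_trans b2 c2) hmeshδ)
  set ℓ : ℕ → ℕ → Fin 3 := fun i j =>
    if 0 ≤ F (P i j) then 1 else if 0 ≤ G (P i j) then 2 else 0 with hℓdef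
  -- recover signs from labels
  have lab1 : ∀ i j, ℓ i j = 1 → 0 ≤ F (P i j) := by
    intro i j h
    by_contra hc
    simp only [hℓdef, if_neg hc] at h
    split_ifs at h <;> exact absurd h (by decide)
  have lab2 : ∀ i j, ℓ i j = 2 → F (P i j) < 0 ∧ 0 ≤ G (P i j) := by
    intro i j h
    by_cases hc : 0 ≤ F (P i j)
    · simp only [hℓdef, if_pos hc] at h; exact absurd h (by decide)
    · refine ⟨not_le.mp hc, ?_⟩
      by_contra hc2
      simp only [hℓdef, if_neg hc, if_neg hc2] at h
      exact absurd h (by decide)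
  have lab0 : ∀ i j, ℓ i j = 0 → G (P i j) < 0 := by
    intro i j h
    by_cases hc : 0 ≤ F (P i j)
    · simp only [hℓdef, if_pos hc] at h; exact absurd h (by decide)
    by_cases hc2 : 0 ≤ G (P i j)
    · simp only [hℓdef, if_neg hc, if_pos hc2] at h; exact absurd h (by decide)
    · exact not_le.mp hc2
  -- boundary conditions
  have hP0 : ∀ j, (P 0 j).1 = a₁ := by intro j; simp [P]
  have hPn : ∀ j, (P n j).1 = a₂ := by
    intro j
    simp only [P]
    field_simp
    ring
  have hQ0 : ∀ i, (P i 0).2 = b₁ := by intro i; simp [P]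
  have hQn : ∀ i, (P i n).2 = b₂ := by
    intro i
    simp only [P]
    field_simp
    ring
  have hL : ∀ j ≤ n, ℓ 0 j ≠ 1 := by
    intro j hj h
    have hmem := hPK 0 (Nat.zero_le n) j hj
    have : F (P 0 j) < 0 := by
      have : P 0 j = (a₁, (P 0 j).2) := Prod.ext (hP0 j) rfl
      rw [this]
      exact hF1 _ hmem.2
    exact absurd (lab1 _ _ h) (not_le.mpr this)
  have hR : ∀ j ≤ n, ℓ n j = 1 := by
    intro j hj
    have hmem := hPK n le_rfl j hj
    have : 0 < F (P n j) := by
      have : P n j = (a₂, (P n j).2) := Prod.ext (hPn j) rfl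
      rw [this]
      exact hF2 _ hmem.2
    simp only [hℓdef, if_pos this.le]
  have hB : ∀ i ≤ n, ℓ i 0 ≠ 2 := by
    intro i hi h
    have hmem := hPK i hi 0 (Nat.zero_le n)
    have : G (P i 0) < 0 := by
      have : P i 0 = ((P i 0).1, b₁) := Prod.ext rfl (hQ0 i)
      rw [this]
      exact hG1 _ hmem.1
    exact absurd (lab2 _ _ h).2 (not_le.mpr this)
  have hT : ∀ i ≤ n, ℓ i n ≠ 0 := by
    intro i hi h
    have hmem := hPK i hi n le_rfl
    have : 0 < G (P i n) := by
      have : P i n = ((P i n).1, b₂) := Prod.ext rfl (hQn i)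
      rw [this]
      exact hG2 _ hmem.1
    exact absurd (lab0 _ _ h) (not_lt.mpr this.le)
  obtain ⟨i, hi, j, hj, q0, q1, q2, hq0m, hq1m, hq2m, hq0, hq1, hq2⟩ :=
    grid_lemma n ℓ hL hR hB hT
  have hrange : ∀ q : ℕ × ℕ, q ∈ ({(i,j),(i+1,j),(i,j+1),(i+1,j+1)} : Set (ℕ × ℕ)) →
      i ≤ q.1 ∧ q.1 ≤ i + 1 ∧ j ≤ q.2 ∧ q.2 ≤ j + 1 := by
    intro q hq
    simp only [Set.mem_insert_iff, Set.mem_singleton_iff] at hq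
    rcases hq with h | h | h | h <;> subst h <;> simp
  have h0r := hrange q0 hq0m
  have h1r := hrange q1 hq1m
  have h2r := hrange q2 hq2m
  have hq0K : P q0.1 q0.2 ∈ K := hPK _ (by omega) _ (by omega)
  have hq1K : P q1.1 q1.2 ∈ K := hPK _ (by omega) _ (by omega)
  have hq2K : P q2.1 q2.2 ∈ K := hPK _ (by omega) _ (by omega)
  have hd1 : dist (P q2.1 q2.2) (P q1.1 q1.2) < δF :=
    lt_of_lt_of_le (hmesh _ _ _ _ (by omega) (by omega) (by omega) (by omega)) (min_le_left _ _)
  have hd0 : dist (P q2.1 q2.2) (P q0.1 q0.2) < δG :=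
    lt_of_lt_of_le (hmesh _ _ _ _ (by omega) (by omega) (by omega) (by omega)) (min_le_right _ _)
  have hF21 : |F (P q2.1 q2.2) - F (P q1.1 q1.2)| < ε := by
    have := hFδ _ hq2K _ hq1K hd1
    rwa [Real.dist_eq] at this
  have hG20 : |G (P q2.1 q2.2) - G (P q0.1 q0.2)| < ε := by
    have := hGδ _ hq2K _ hq0K hd0
    rwa [Real.dist_eq] at this
  obtain ⟨hF2neg, hG2nonneg⟩ := lab2 _ _ hq2
  have hF1nonneg := lab1 _ _ hq1
  have hG0neg := lab0 _ _ hq0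
  refine ⟨P q2.1 q2.2, hq2K, ?_, ?_⟩
  · rw [abs_le]
    rw [abs_lt] at hF21
    constructor <;> linarith
  · rw [abs_le]
    rw [abs_lt] at hG20
    constructor <;> linarith

/-- Poincaré–Miranda theorem in dimension 2: if `f, g` are continuous on the rectangle
`[a₁,a₂]×[b₁,b₂]`, `f(a₁,·) ≤ 0 ≤ f(a₂,·)` and `g(·,b₁) ≤ 0 ≤ g(·,b₂)`, then there is a
common zero of `f` and `g` in the rectangle. -/
theorem stmt11 (a₁ a₂ b₁ b₂ : ℝ) (ha : a₁ < a₂) (hb : b₁ < b₂)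
    (f g : ℝ × ℝ → ℝ)
    (hf : ContinuousOn f (Set.Icc a₁ a₂ ×ˢ Set.Icc b₁ b₂))
    (hg : ContinuousOn g (Set.Icc a₁ a₂ ×ˢ Set.Icc b₁ b₂))
    (hf1 : ∀ y ∈ Set.Icc b₁ b₂, f (a₁, y) ≤ 0)
    (hf2 : ∀ y ∈ Set.Icc b₁ b₂, 0 ≤ f (a₂, y))
    (hg1 : ∀ x ∈ Set.Icc a₁ a₂, g (x, b₁) ≤ 0)
    (hg2 : ∀ x ∈ Set.Icc a₁ a₂, 0 ≤ g (x, b₂)) :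
    ∃ p ∈ Set.Icc a₁ a₂ ×ˢ Set.Icc b₁ b₂, f p = 0 ∧ g p = 0 := by
  set K := Set.Icc a₁ a₂ ×ˢ Set.Icc b₁ b₂ with hKdef
  have hKc : IsCompact K := isCompact_Icc.prod isCompact_Icc
  have hKne : K.Nonempty := ⟨(a₁, b₁), ⟨le_refl a₁, ha.le⟩, ⟨le_refl b₁, hb.le⟩⟩
  have key : ∀ ε : ℝ, 0 < ε → ∃ p ∈ K, |f p| ≤ ε ∧ |g p| ≤ ε := by
    intro ε hε
    set δ₁ : ℝ := ε / (2 * (a₂ - a₁)) with hδ₁def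
    set δ₂ : ℝ := ε / (2 * (b₂ - b₁)) with hδ₂def
    have hδ₁ : 0 < δ₁ := by
      apply div_pos hε; linarith
    have hδ₂ : 0 < δ₂ := by
      apply div_pos hε; linarith
    have hane : a₂ - a₁ ≠ 0 := sub_ne_zero.mpr ha.ne'
    have hbne : b₂ - b₁ ≠ 0 := sub_ne_zero.mpr hb.ne'
    have he1 : δ₁ * (a₂ - a₁) = ε / 2 := by
      rw [hδ₁def]; field_simp
    have he2 : δ₂ * (b₂ - b₁) = ε / 2 := by
      rw [hδ₂def]; field_simp
    set F : ℝ × ℝ → ℝ := fun p => f p + δ₁ * (2 * p.1 - a₁ - a₂) with hFdef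
    set G : ℝ × ℝ → ℝ := fun p => g p + δ₂ * (2 * p.2 - b₁ - b₂) with hGdef
    have hFc : ContinuousOn F K := by
      apply hf.add
      exact ((continuous_const.mul (((continuous_const.mul continuous_fst).sub
        continuous_const).sub continuous_const))).continuousOn
    have hGc : ContinuousOn G K := by
      apply hg.add
      exact ((continuous_const.mul (((continuous_const.mul continuous_snd).sub
        continuous_const).sub continuous_const))).continuousOn
    have hF1 : ∀ y ∈ Set.Icc b₁ b₂, F (a₁, y) < 0 := by
      intro y hy
      have := hf1 y hy
      simp only [hFdef]
      have : δ₁ * (2 * a₁ - a₁ - a₂) = -(ε / 2) := by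
        rw [show 2 * a₁ - a₁ - a₂ = -(a₂ - a₁) by ring, mul_neg, he1]
      simp only [this]
      have hfa := hf1 y hy
      linarith
    have hF2 : ∀ y ∈ Set.Icc b₁ b₂, 0 < F (a₂, y) := by
      intro y hy
      simp only [hFdef]
      have : δ₁ * (2 * a₂ - a₁ - a₂) = ε / 2 := by
        rw [show 2 * a₂ - a₁ - a₂ = a₂ - a₁ by ring, he1]
      simp only [this]
      have hfa := hf2 y hy
      linarith
    have hG1 : ∀ x ∈ Set.Icc a₁ a₂, G (x, b₁) < 0 := by
      intro x hx
      simp only [hGdef]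
      have : δ₂ * (2 * b₁ - b₁ - b₂) = -(ε / 2) := by
        rw [show 2 * b₁ - b₁ - b₂ = -(b₂ - b₁) by ring, mul_neg, he2]
      simp only [this]
      have hga := hg1 x hx
      linarith
    have hG2 : ∀ x ∈ Set.Icc a₁ a₂, 0 < G (x, b₂) := by
      intro x hx
      simp only [hGdef]
      have : δ₂ * (2 * b₂ - b₁ - b₂) = ε / 2 := by
        rw [show 2 * b₂ - b₁ - b₂ = b₂ - b₁ by ring, he2]
      simp only [this]
      have hga := hg2 x hx
      linarith
    obtain ⟨p, hpK, hFp, hGp⟩ := approx_pm a₁ a₂ b₁ b₂ ha hb F G hFc hGc hF1 hF2 hG1 hG2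
      (ε / 2) (by linarith)
    refine ⟨p, hpK, ?_, ?_⟩
    · have hx : p.1 ∈ Set.Icc a₁ a₂ := hpK.1
      have hbd : |δ₁ * (2 * p.1 - a₁ - a₂)| ≤ ε / 2 := by
        rw [abs_mul, abs_of_pos hδ₁, ← he1]
        have : |2 * p.1 - a₁ - a₂| ≤ a₂ - a₁ := by
          rw [abs_le]
          obtain ⟨h1, h2⟩ := hx
          constructor <;> linarith
        nlinarith
      have : f p = F p - δ₁ * (2 * p.1 - a₁ - a₂) := by simp [hFdef]
      rw [this]
      calc |F p - δ₁ * (2 * p.1 - a₁ - a₂)| ≤ |F p| + |δ₁ * (2 * p.1 - a₁ - a₂)| :=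
            abs_sub _ _
        _ ≤ ε / 2 + ε / 2 := add_le_add hFp hbd
        _ = ε := by ring
    · have hy : p.2 ∈ Set.Icc b₁ b₂ := hpK.2
      have hbd : |δ₂ * (2 * p.2 - b₁ - b₂)| ≤ ε / 2 := by
        rw [abs_mul, abs_of_pos hδ₂, ← he2]
        have : |2 * p.2 - b₁ - b₂| ≤ b₂ - b₁ := by
          rw [abs_le]
          obtain ⟨h1, h2⟩ := hy
          constructor <;> linarith
        nlinarith
      have : g p = G p - δ₂ * (2 * p.2 - b₁ - b₂) := by simp [hGdef]
      rw [this]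
      calc |G p - δ₂ * (2 * p.2 - b₁ - b₂)| ≤ |G p| + |δ₂ * (2 * p.2 - b₁ - b₂)| :=
            abs_sub _ _
        _ ≤ ε / 2 + ε / 2 := add_le_add hGp hbd
        _ = ε := by ring
  have hcont : ContinuousOn (fun p => |f p| ⊔ |g p|) K := (hf.abs).sup (hg.abs)
  obtain ⟨p₀, hp₀, hmin⟩ := hKc.exists_isMinOn hKne hcont
  have h0 : max |f p₀| |g p₀| ≤ 0 := by
    by_contra hc
    push_neg at hc
    obtain ⟨p, hp, h1, h2⟩ := key (max |f p₀| |g p₀| / 2) (by linarith)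
    have hle : max |f p₀| |g p₀| ≤ max |f p| |g p| := hmin hp
    have : max |f p| |g p| ≤ max |f p₀| |g p₀| / 2 := max_le h1 h2
    linarith
  refine ⟨p₀, hp₀, ?_, ?_⟩
  · exact abs_nonpos_iff.mp (le_trans (le_max_left _ _) h0)
  · exact abs_nonpos_iff.mp (le_trans (le_max_right _ _) h0)
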